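/- Let σ̄_+(z_1),…,σ̄_+(z_r) be the inverse Schubert derivations extended to the fermionic Fock space. Then for all m ∈ ℤ and r ≥ 0: b_m ∧ b_{m−1} ∧ ⋯ ∧ b_{m−r+1} ∧ (σ̄_+(z_1)⋯σ̄_+(z_r)[b]_{m−r}) = [b]_m. -/

import Mathlib

open ExteriorAlgebra

noncomputable section

/-- `M = ⊕_{i∈ℤ} ℤ bᵢ`. -/
abbrev M : Type := ℤ →₀ ℤ
def b (i : ℤ) : M := Finsupp.single i 1
abbrev A : Type := ExteriorAlgebra ℤ M

/-- `[M]`, the free ℤ-module on the symbols `[b]_m`, `m ∈ ℤ`. -/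
abbrev V : Type := ℤ →₀ ℤ
def v (m : ℤ) : V := Finsupp.single m 1

/-- The `⋀M`-submodule of relations: generated by `b_m ⊗ [b]_{m−1} − 1 ⊗ [b]_m`
and `b_m ⊗ [b]_m`. -/
def W : Submodule A (TensorProduct ℤ A V) :=
  Submodule.span A {x | ∃ m : ℤ,
    x = (ι ℤ (b m)) ⊗ₜ[ℤ] v (m - 1) - (1 : A) ⊗ₜ[ℤ] v m ∨ x = (ι ℤ (b m)) ⊗ₜ[ℤ] v m}

/-- The fermionic Fock space `F = (⋀M ⊗ [M]) / W`; the class of `u ⊗ [b]_m`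
is the wedge `u ∧ [b]_m`, realized as the scalar action `u • -` of `⋀M`. -/
abbrev F : Type := TensorProduct ℤ A V ⧸ W

/-- `[b]_m ∈ F`. -/
def bb (m : ℤ) : F := Submodule.Quotient.mk ((1 : A) ⊗ₜ[ℤ] v m)

/-- `b^r_{m+λ} = b_{m+λ₁} ∧ b_{m−1+λ₂} ∧ ⋯ ∧ b_{m−r+1+λ_r} ∈ ⋀^r M` (0-indexed `λ`). -/
def wb (m : ℤ) (r : ℕ) (lam : Fin r → ℕ) : A :=
  (List.ofFn fun k : Fin r => ι ℤ (b (m - ((k : ℕ) : ℤ) + ((lam k : ℕ) : ℤ)))).prod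

/-- `[b]_{m+λ} = b^r_{m+λ} ∧ [b]_{m−r} ∈ F`. -/
def bbp (m : ℤ) (r : ℕ) (lam : Fin r → ℕ) : F := wb m r lam • bb (m - r)

/-- The charge-`n` Fock space `F_n = ⊕_{λ∈𝒫} ℤ·[b]_{n+λ}`. -/
def Fm (n : ℤ) : Submodule ℤ F :=
  Submodule.span ℤ {x | ∃ (r : ℕ) (lam : Fin r → ℕ), Antitone lam ∧ x = bbp n r lam}

/-- Hasse–Schmidt derivation on `⋀M`, coefficientwise. -/
def IsHS (D : ℕ → Module.End ℤ A) : Prop :=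
  ∀ (n : ℕ) (u w : A), D n (u * w) = ∑ j ∈ Finset.range (n + 1), D j u * D (n - j) w

/-- `cF` extends `cA` multiplicatively from `⋀M` to the Fock space `F`:
`D(z)(u ∧ f) = D(z)u ∧ D(z)f`, coefficientwise. -/
def MultOver (cA : ℕ → Module.End ℤ A) (cF : ℕ → Module.End ℤ F) : Prop :=
  ∀ (n : ℕ) (u : A) (f : F), cF n (u • f) = ∑ j ∈ Finset.range (n + 1), cA j u • cF (n - j) f

def IsSigmaPlus (c : ℕ → Module.End ℤ A) : Prop :=
  IsHS c ∧ c 0 = 1 ∧ ∀ (n : ℕ) (j : ℤ), c n (ι ℤ (b j)) = ι ℤ (b (j + n))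

def IsSigmaMinus (c : ℕ → Module.End ℤ A) : Prop :=
  IsHS c ∧ c 0 = 1 ∧ ∀ (n : ℕ) (j : ℤ), c n (ι ℤ (b j)) = ι ℤ (b (j - n))

def IsSigmaBarPlus (c : ℕ → Module.End ℤ A) : Prop :=
  IsHS c ∧ c 0 = 1 ∧ (∀ j : ℤ, c 1 (ι ℤ (b j)) = -(ι ℤ (b (j + 1)))) ∧
    ∀ n : ℕ, 2 ≤ n → ∀ j : ℤ, c n (ι ℤ (b j)) = 0

def IsSigmaBarMinus (c : ℕ → Module.End ℤ A) : Prop :=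
  IsHS c ∧ c 0 = 1 ∧ (∀ j : ℤ, c 1 (ι ℤ (b j)) = -(ι ℤ (b (j - 1)))) ∧
    ∀ n : ℕ, 2 ≤ n → ∀ j : ℤ, c n (ι ℤ (b j)) = 0

/-- `b_m ∧ ⋯ ∧ b_{m−r+1} ∧ (σ̄₊(z₁)⋯σ̄₊(z_r)[b]_{m−r}) = [b]_m`, stated as the identity
of the coefficient of `z₁^{a₁}⋯z_r^{a_r}` for every multi-exponent `a`.  Here `cF`
lists the coefficients of `σ̄₊(z)` extended to `F`, so that
`σ̄₊(z)[b]_k = ∑_{j≥0} (−1)^j [b]_{k+(1^j)} z^j`. -/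
lemma wb_zero (m : ℤ) (lam : Fin 0 → ℕ) : wb m 0 lam = 1 := by
  simp [wb]

lemma wb_succ (m : ℤ) (r : ℕ) (lam : Fin (r+1) → ℕ) :
    wb m (r+1) lam = ι ℤ (b (m + (lam 0 : ℤ))) * wb (m-1) r (fun i => lam i.succ) := by
  unfold wb
  rw [List.ofFn_succ, List.prod_cons]
  refine congrArg₂ _ (by norm_num) (congrArg List.prod (congrArg List.ofFn (funext fun i => ?_)))
  congr 2
  push_cast [Fin.val_succ]
  ring

lemma bb_step (m : ℤ) : (ι ℤ (b m) : A) • bb (m-1) = bb m := by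
  unfold bb
  rw [← Submodule.Quotient.mk_smul W, Submodule.Quotient.eq]
  refine Submodule.subset_span ⟨m, Or.inl ?_⟩
  rw [TensorProduct.smul_tmul', smul_eq_mul, mul_one]

lemma hs_one {D : ℕ → Module.End ℤ A} (hD : IsHS D) (h0 : D 0 = 1) :
    ∀ n : ℕ, 1 ≤ n → D n (1 : A) = 0 := by
  intro n
  induction n using Nat.strong_induction_on with
  | _ n ih =>
    intro hn
    obtain ⟨k, rfl⟩ : ∃ k, n = k + 1 := ⟨n - 1, by omega⟩
    have h := hD (k+1) 1 1
    rw [one_mul, Finset.sum_range_succ, Finset.sum_range_succ'] at h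
    simp only [h0, Module.End.one_apply, Nat.sub_self, Nat.sub_zero, one_mul, mul_one] at h
    have hmid : ∀ i ∈ Finset.range k, D (i+1) (1:A) * D (k+1-(i+1)) (1:A) = 0 := by
      intro i hi
      rw [ih (i+1) (by simp at hi; omega) (by omega), zero_mul]
    rw [Finset.sum_congr rfl hmid, Finset.sum_const_zero, zero_add] at h
    -- h : D (k+1) 1 = D (k+1) 1 + D (k+1) 1
    exact right_eq_add.mp h

lemma wb_succ_zero (m : ℤ) (r : ℕ) :
    wb m (r+1) (fun _ => 0) = ι ℤ (b m) * wb (m-1) r (fun _ => 0) := by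
  rw [wb_succ]; norm_num

lemma wb_succ_one (m : ℤ) (r : ℕ) :
    wb m (r+1) (fun _ => 1) = ι ℤ (b (m+1)) * wb (m-1) r (fun _ => 1) := by
  rw [wb_succ]; norm_num

lemma sbar_wb {sbA : ℕ → Module.End ℤ A} (hsbA : IsSigmaBarPlus sbA) :
    ∀ (r : ℕ) (m : ℤ) (j : ℕ), 1 ≤ j →
      ∃ y : A, sbA j (wb m r (fun _ => 0)) = ι ℤ (b (m+1)) * y := by
  intro r
  induction r with
  | zero =>
    intro m j hj
    exact ⟨0, by rw [wb_zero, hs_one hsbA.1 hsbA.2.1 j hj, mul_zero]⟩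
  | succ r ih =>
    intro m j hj
    rw [wb_succ_zero]
    set w := wb (m-1) r (fun _ => 0) with hw
    have h := hsbA.1 j (ι ℤ (b m)) w
    have hsub : Finset.range 2 ⊆ Finset.range (j + 1) := by
      intro i hi; simp at hi ⊢; omega
    have hzero : ∀ i ∈ Finset.range (j+1), i ∉ Finset.range 2 →
        sbA i (ι ℤ (b m)) * sbA (j-i) w = 0 := by
      intro i _ hi
      rw [hsbA.2.2.2 i (by simp at hi; omega) m, zero_mul]
    rw [← Finset.sum_subset hsub hzero, Finset.sum_range_succ, Finset.sum_range_one] at h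
    obtain ⟨y, hy⟩ := ih (m-1) j hj
    rw [show m - 1 + 1 = m by ring] at hy
    rw [h, hsbA.2.1, Module.End.one_apply, Nat.sub_zero, hy, ← mul_assoc,
      ι_sq_zero, zero_mul, zero_add, hsbA.2.2.1]
    exact ⟨-(sbA (j-1) w), by rw [neg_mul, mul_neg]⟩

theorem stmt10 (sbA : ℕ → Module.End ℤ A) (hsbA : IsSigmaBarPlus sbA)
    (cF : ℕ → Module.End ℤ F) (hmult : MultOver sbA cF)
    (hbb : ∀ (n : ℕ) (k : ℤ), cF n (bb k) = ((-1 : ℤ) ^ n) • bbp k n fun _ => 1) :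
    ∀ (m : ℤ) (r : ℕ) (a : Fin r → ℕ),
      wb m r (fun _ => 0) • ((List.ofFn fun k : Fin r => cF (a k)).prod (bb (m - r))) =
        if ∀ k, a k = 0 then bb m else 0 := by
  intro m r
  induction r generalizing m with
  | zero =>
    intro a
    rw [if_pos (fun k => k.elim0)]
    simp [wb_zero]
  | succ r ih =>
    intro a
    have harith : m - ((r+1 : ℕ) : ℤ) = m - 1 - (r : ℕ) := by push_cast; ring
    rw [wb_succ_zero, harith]
    simp only [List.ofFn_succ, List.prod_cons, Module.End.mul_apply]
    set h := (List.ofFn fun i : Fin r => cF (a i.succ)).prod (bb (m - 1 - (r:ℕ))) with hh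
    set u := wb (m-1) r (fun _ => 0) with hu
    have key := hmult (a 0) u h
    rw [Finset.sum_range_succ'] at key
    simp only [hsbA.2.1, Module.End.one_apply, Nat.sub_zero] at key
    have hmain : u • cF (a 0) h = cF (a 0) (u • h)
        - ∑ i ∈ Finset.range (a 0), sbA (i+1) u • cF (a 0 - (i+1)) h :=
      (sub_eq_of_eq_add' key).symm
    rw [mul_smul, hmain, smul_sub, Finset.smul_sum]
    have hS : ∀ i ∈ Finset.range (a 0),
        ι ℤ (b m) • (sbA (i+1) u • cF (a 0 - (i+1)) h) = 0 := by
      intro i _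
      obtain ⟨y, hy⟩ := sbar_wb hsbA r (m-1) (i+1) (Nat.le_add_left 1 i)
      rw [show m - 1 + 1 = m by ring] at hy
      rw [smul_smul, hy, ← mul_assoc, ι_sq_zero, zero_mul, zero_smul]
    rw [Finset.sum_congr rfl hS, Finset.sum_const_zero, sub_zero]
    have hIH := ih (m-1) (fun k => a k.succ)
    by_cases hz : ∀ k : Fin r, a k.succ = 0
    · rw [if_pos hz] at hIH
      rw [hIH]
      rcases Nat.eq_zero_or_pos (a 0) with ha0 | hpos
      · rw [ha0, hbb 0 (m-1), if_pos (fun k => Fin.cases ha0 hz k)]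
        simp only [pow_zero, one_smul]
        unfold bbp
        rw [wb_zero, one_smul]
        rw [show m - 1 - ((0:ℕ):ℤ) = m - 1 by push_cast; ring]
        exact bb_step m
      · obtain ⟨n, hn⟩ : ∃ n, a 0 = n + 1 := ⟨a 0 - 1, by omega⟩
        rw [if_neg (fun hall => by rw [hall 0] at hn; exact Nat.succ_ne_zero n hn.symm)]
        rw [hn, hbb (n+1) (m-1)]
        unfold bbp
        rw [wb_succ_one, show m - 1 + 1 = m by ring]
        rw [smul_comm (ι ℤ (b m) : A) ((-1:ℤ)^(n+1)), smul_smul, ← mul_assoc,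
          ι_sq_zero, zero_mul, zero_smul, smul_zero]
    · rw [if_neg hz] at hIH
      rw [hIH, map_zero, smul_zero,
        if_neg (fun hall => hz (fun k => hall k.succ))]
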